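/- Let y ∈ H²(0,1) with y'(0) = y'(1) = 0, let Q_h be the L² projection onto S̃_h¹(0,1), and assume the uniform partition with mesh size h. Then ‖y' − (Q_h y)'‖_{L²(0,1)} ≤ (1/2)(√2 + 4√3) h ‖y''‖_{L²(0,1)}. -/

import Mathlib

open MeasureTheory intervalIntegral

/-- Membership in the modified piecewise linear finite element space
S̃_h¹(0,1). -/
def ModPW (n : ℕ) (x : ℕ → ℝ) (f : ℝ → ℝ) : Prop :=
  ContinuousOn f (Set.Icc 0 1) ∧
  (∀ t ∈ Set.Icc (x 0) (x 1), f t = f (x 1)) ∧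
  (∀ t ∈ Set.Icc (x (n - 1)) (x n), f t = f (x (n - 1))) ∧
  (∀ i, 1 ≤ i → i + 1 ≤ n - 1 →
    ∃ α β : ℝ, ∀ t ∈ Set.Icc (x i) (x (i + 1)), f t = α + β * t)



lemma cs_int (a b : ℝ) (hab : a ≤ b) (f g : ℝ → ℝ)
    (hfg : IntervalIntegrable (fun t => f t * g t) volume a b)
    (hf2 : IntervalIntegrable (fun t => f t ^ 2) volume a b)
    (hg2 : IntervalIntegrable (fun t => g t ^ 2) volume a b) :
    (∫ t in a..b, f t * g t) ^ 2 ≤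
      (∫ t in a..b, f t ^ 2) * ∫ t in a..b, g t ^ 2 := by
  have key : ∀ x : ℝ, 0 ≤ (∫ t in a..b, g t ^ 2) * (x * x) +
      (2 * ∫ t in a..b, f t * g t) * x + ∫ t in a..b, f t ^ 2 := by
    intro x
    have hint : ∫ t in a..b, (x * g t + f t) ^ 2 =
        (∫ t in a..b, g t ^ 2) * (x * x) +
          (2 * ∫ t in a..b, f t * g t) * x + ∫ t in a..b, f t ^ 2 := by
      have : ∀ t : ℝ, (x * g t + f t) ^ 2 =
          (x * x) * g t ^ 2 + (2 * x) * (f t * g t) + f t ^ 2 := by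
        intro t; ring
      rw [intervalIntegral.integral_congr (g := fun t =>
        (x * x) * g t ^ 2 + (2 * x) * (f t * g t) + f t ^ 2) (fun t _ => this t)]
      rw [intervalIntegral.integral_add ((hg2.const_mul _).add (hfg.const_mul _)) hf2,
        intervalIntegral.integral_add (hg2.const_mul _) (hfg.const_mul _),
        intervalIntegral.integral_const_mul, intervalIntegral.integral_const_mul]
      ring
    rw [← hint]
    exact intervalIntegral.integral_nonneg hab (fun u _ => sq_nonneg _)
  have := discrim_le_zero key
  rw [discrim] at this
  nlinarith [this]

lemma sq_int_le (a b : ℝ) (hab : a ≤ b) (f : ℝ → ℝ)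
    (hf : IntervalIntegrable f volume a b)
    (hf2 : IntervalIntegrable (fun t => f t ^ 2) volume a b) :
    (∫ t in a..b, f t) ^ 2 ≤ (b - a) * ∫ t in a..b, f t ^ 2 := by
  have := cs_int a b hab f (fun _ => 1) (by simpa using hf) hf2 (by simpa using
    (intervalIntegrable_const : IntervalIntegrable (fun _ : ℝ => (1:ℝ)) volume a b))
  simp only [mul_one, one_pow] at this
  simpa [intervalIntegral.integral_const, smul_eq_mul, mul_comm] using this

lemma int_abs (a b ξ : ℝ) (h1 : a ≤ ξ) (h2 : ξ ≤ b) :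
    ∫ t in a..b, |t - ξ| = ((ξ - a) ^ 2 + (b - ξ) ^ 2) / 2 := by
  have c1 : ContinuousOn (fun t : ℝ => |t - ξ|) (Set.uIcc a ξ) :=
    ((continuous_id.sub continuous_const).abs).continuousOn
  have c2 : ContinuousOn (fun t : ℝ => |t - ξ|) (Set.uIcc ξ b) :=
    ((continuous_id.sub continuous_const).abs).continuousOn
  rw [← intervalIntegral.integral_add_adjacent_intervals (b := ξ)
    c1.intervalIntegrable c2.intervalIntegrable]
  have e1 : ∫ t in a..ξ, |t - ξ| = ∫ t in a..ξ, (ξ - t) := by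
    apply intervalIntegral.integral_congr
    intro t ht
    rw [Set.uIcc_of_le h1] at ht
    show |t - ξ| = ξ - t
    rw [abs_of_nonpos (by linarith [ht.2])]; ring
  have e2 : ∫ t in ξ..b, |t - ξ| = ∫ t in ξ..b, (t - ξ) := by
    apply intervalIntegral.integral_congr
    intro t ht
    rw [Set.uIcc_of_le h2] at ht
    show |t - ξ| = t - ξ
    rw [abs_of_nonneg (by linarith [ht.1])]
  rw [e1, e2,
    intervalIntegral.integral_sub intervalIntegrable_const intervalIntegral.intervalIntegrable_id,
    intervalIntegral.integral_sub intervalIntegral.intervalIntegrable_id intervalIntegrable_const,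
    integral_id, integral_id]
  simp only [intervalIntegral.integral_const, smul_eq_mul]
  ring

lemma W1 (a b ξ : ℝ) (hab : a ≤ b) (hξ1 : a ≤ ξ) (hξ2 : ξ ≤ b)
    (f f' : ℝ → ℝ) (hd : ∀ t, HasDerivAt f (f' t) t)
    (hf' : IntervalIntegrable f' volume a b)
    (hf'2 : IntervalIntegrable (fun t => f' t ^ 2) volume a b)
    (h0 : f ξ = 0) :
    ∫ t in a..b, f t ^ 2 ≤ ((b - a) ^ 2 / 2) * ∫ t in a..b, f' t ^ 2 := by
  set B := ∫ t in a..b, f' t ^ 2 with hB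
  have hBnn : 0 ≤ B := intervalIntegral.integral_nonneg hab (fun u _ => sq_nonneg _)
  have hcont : Continuous f := by
    rw [continuous_iff_continuousAt]; exact fun t => (hd t).continuousAt
  have key : ∀ t ∈ Set.Icc a b, f t ^ 2 ≤ |t - ξ| * B := by
    intro t ht
    have hsub : Set.uIcc ξ t ⊆ Set.uIcc a b := by
      rw [Set.uIcc_of_le hab]
      exact Set.uIcc_subset_Icc ⟨hξ1, hξ2⟩ ⟨ht.1, ht.2⟩
    have hint : IntervalIntegrable f' volume ξ t := hf'.mono_set hsub
    have hint2 : IntervalIntegrable (fun s => f' s ^ 2) volume ξ t := hf'2.mono_set hsub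
    have hftc : f t = ∫ s in ξ..t, f' s := by
      rw [intervalIntegral.integral_eq_sub_of_hasDerivAt (fun s _ => hd s) hint, h0, sub_zero]
    rcases le_total ξ t with hc | hc
    · have h1 := sq_int_le ξ t hc f' hint hint2
      have h2 : (∫ s in ξ..t, f' s ^ 2) ≤ B :=
        intervalIntegral.integral_mono_interval hξ1 hc ht.2
          (Filter.Eventually.of_forall fun s => sq_nonneg _) hf'2
      rw [hftc, abs_of_nonneg (by linarith)]
      nlinarith
    · have hint' : IntervalIntegrable f' volume t ξ := hint.symm
      have hint2' : IntervalIntegrable (fun s => f' s ^ 2) volume t ξ := hint2.symm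
      have h1 := sq_int_le t ξ hc f' hint' hint2'
      have h2 : (∫ s in t..ξ, f' s ^ 2) ≤ B :=
        intervalIntegral.integral_mono_interval ht.1 hc hξ2
          (Filter.Eventually.of_forall fun s => sq_nonneg _) hf'2
      rw [hftc, intervalIntegral.integral_symm, abs_of_nonpos (by linarith), neg_sq]
      nlinarith
  have step : ∫ t in a..b, f t ^ 2 ≤ ∫ t in a..b, |t - ξ| * B := by
    apply intervalIntegral.integral_mono_on hab
      ((hcont.pow 2).continuousOn.intervalIntegrable)
      ((((continuous_id.sub continuous_const).abs.mul continuous_const)).continuousOn.intervalIntegrable)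
      key
  have : ∫ t in a..b, |t - ξ| * B = (((ξ - a) ^ 2 + (b - ξ) ^ 2) / 2) * B := by
    rw [intervalIntegral.integral_mul_const, int_abs a b ξ hξ1 hξ2]
  rw [this] at step
  have hfin : (((ξ - a) ^ 2 + (b - ξ) ^ 2) / 2) * B ≤ ((b - a) ^ 2 / 2) * B := by
    apply mul_le_mul_of_nonneg_right _ hBnn
    nlinarith [mul_nonneg (sub_nonneg.2 hξ1) (sub_nonneg.2 hξ2)]
  linarith


lemma int_linear_sq (a b α β : ℝ) :
    ∫ t in a..b, (α + β * t) ^ 2 =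
      α ^ 2 * (b - a) + α * β * (b ^ 2 - a ^ 2) + β ^ 2 * (b ^ 3 - a ^ 3) / 3 := by
  have e : ∀ t : ℝ, (α + β * t) ^ 2 = α ^ 2 + (2 * α * β) * t + β ^ 2 * t ^ 2 := by
    intro t; ring
  rw [intervalIntegral.integral_congr (g := fun t =>
      α ^ 2 + (2 * α * β) * t + β ^ 2 * t ^ 2) (fun t _ => e t)]
  have i1 : IntervalIntegrable (fun t : ℝ => α ^ 2 + (2 * α * β) * t) volume a b :=
    (continuous_const.add (continuous_const.mul continuous_id)).continuousOn.intervalIntegrable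
  have i2 : IntervalIntegrable (fun t : ℝ => β ^ 2 * t ^ 2) volume a b :=
    (continuous_const.mul (continuous_pow 2)).continuousOn.intervalIntegrable
  rw [intervalIntegral.integral_add i1 i2,
    intervalIntegral.integral_add intervalIntegrable_const
      (intervalIntegral.intervalIntegrable_id.const_mul _),
    intervalIntegral.integral_const_mul, intervalIntegral.integral_const_mul,
    integral_id, integral_pow]
  simp only [intervalIntegral.integral_const, smul_eq_mul]
  ring

lemma W2 (a b α β : ℝ) (hab : a ≤ b) :
    (b - a) ^ 3 * β ^ 2 ≤ 12 * ∫ t in a..b, (α + β * t) ^ 2 := by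
  rw [int_linear_sq]
  nlinarith [mul_nonneg (sub_nonneg.2 hab) (sq_nonneg (2 * α + β * (a + b)))]


noncomputable def hatf (h : ℝ) (i : ℕ) (s : ℝ) : ℝ := max 0 (1 - |s / h - i|)

noncomputable def clampI (n : ℕ) (h t : ℝ) : ℝ := min (max t h) (((n - 1 : ℕ) : ℝ) * h)

noncomputable def interp (n : ℕ) (h : ℝ) (y : ℝ → ℝ) (t : ℝ) : ℝ :=
  ∑ i ∈ Finset.Icc 1 (n - 1), y ((i : ℝ) * h) * hatf h i (clampI n h t)

lemma hatf_cont (h : ℝ) (i : ℕ) : Continuous (hatf h i) :=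
  continuous_const.max
    (continuous_const.sub ((continuous_id.div_const h).sub continuous_const).abs)

lemma clampI_cont (n : ℕ) (h : ℝ) : Continuous (clampI n h) :=
  (continuous_id.max continuous_const).min continuous_const

lemma interp_cont (n : ℕ) (h : ℝ) (y : ℝ → ℝ) : Continuous (interp n h y) := by
  apply continuous_finset_sum
  intro i _
  exact continuous_const.mul ((hatf_cont h i).comp (clampI_cont n h))

lemma nat_abs_ge (i j : ℕ) (hij : j ≠ i) : 1 ≤ |(i : ℝ) - j| := by
  rcases lt_or_gt_of_ne hij with hc | hc
  · have h1 : (j : ℝ) + 1 ≤ i := by exact_mod_cast hc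
    rw [abs_of_nonneg (by linarith)]; linarith
  · have h1 : (i : ℝ) + 1 ≤ j := by exact_mod_cast hc
    rw [abs_of_nonpos (by linarith)]; linarith

lemma hatf_zero (h : ℝ) (i : ℕ) (s : ℝ) (hz : 1 ≤ |s / h - i|) : hatf h i s = 0 :=
  max_eq_left (by linarith)

lemma hatf_node (h : ℝ) (hpos : 0 < h) (i j : ℕ) :
    hatf h j ((i : ℝ) * h) = if j = i then 1 else 0 := by
  unfold hatf
  rw [mul_div_assoc, div_self hpos.ne', mul_one]
  split
  · subst ‹j = i›; rw [sub_self, abs_zero]; simp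
  · rw [max_eq_left]
    have := nat_abs_ge i j ‹j ≠ i›
    linarith

lemma node_eval (n : ℕ) (h : ℝ) (hpos : 0 < h) (y : ℝ → ℝ) (i : ℕ)
    (hi1 : 1 ≤ i) (hi2 : i ≤ n - 1) :
    (∑ j ∈ Finset.Icc 1 (n - 1), y ((j : ℝ) * h) * hatf h j ((i : ℝ) * h)) =
      y ((i : ℝ) * h) := by
  rw [Finset.sum_eq_single_of_mem i (Finset.mem_Icc.2 ⟨hi1, hi2⟩)]
  · rw [hatf_node h hpos i i, if_pos rfl, mul_one]
  · intro j _ hji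
    rw [hatf_node h hpos i j, if_neg hji, mul_zero]

lemma cell_eval (n : ℕ) (h : ℝ) (hpos : 0 < h) (y : ℝ → ℝ) (i : ℕ)
    (hi1 : 1 ≤ i) (hi2 : i + 1 ≤ n - 1) (s : ℝ)
    (hs : s ∈ Set.Icc ((i : ℝ) * h) (((i : ℝ) + 1) * h)) :
    (∑ j ∈ Finset.Icc 1 (n - 1), y ((j : ℝ) * h) * hatf h j s) =
      y ((i : ℝ) * h) * (((i : ℝ) + 1) - s / h) +
        y (((i : ℝ) + 1) * h) * (s / h - (i : ℝ)) := by
  have hsh1 : (i : ℝ) ≤ s / h := (le_div_iff₀ hpos).2 (by simpa using hs.1)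
  have hsh2 : s / h ≤ (i : ℝ) + 1 := (div_le_iff₀ hpos).2 (by simpa using hs.2)
  have hpair : ({i, i + 1} : Finset ℕ) ⊆ Finset.Icc 1 (n - 1) := by
    intro j hj
    rcases Finset.mem_insert.1 hj with rfl | hj
    · exact Finset.mem_Icc.2 ⟨hi1, by omega⟩
    · rw [Finset.mem_singleton] at hj; subst hj
      exact Finset.mem_Icc.2 ⟨by omega, hi2⟩
  rw [← Finset.sum_subset hpair]
  · rw [Finset.sum_pair (by omega : i ≠ i + 1)]
    have e1 : hatf h i s = 1 - (s / h - (i : ℝ)) := by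
      unfold hatf
      rw [abs_of_nonneg (by linarith), max_eq_right (by linarith)]
    have e2 : hatf h (i + 1) s = 1 - (((i : ℝ) + 1) - s / h) := by
      unfold hatf
      push_cast
      rw [abs_of_nonpos (by linarith), max_eq_right (by linarith)]
      ring
    rw [e1, e2]
    push_cast
    ring
  · intro j hjmem hjnot
    have hji : j ≠ i := by
      intro hc; exact hjnot (by simp [hc])
    have hji1 : j ≠ i + 1 := by
      intro hc; exact hjnot (by simp [hc])
    rw [hatf_zero, mul_zero]
    rcases lt_or_gt_of_ne hji with hc | hc
    · -- j < i, so j ≤ i - 1, s/h - j ≥ i - j ≥ 1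
      have h1 : (j : ℝ) + 1 ≤ i := by exact_mod_cast hc
      rw [abs_of_nonneg (by linarith)]; linarith
    · -- j > i and j ≠ i+1 so j ≥ i+2
      have h2 : i + 2 ≤ j := by omega
      have h1 : (i : ℝ) + 2 ≤ j := by exact_mod_cast h2
      rw [abs_of_nonpos (by linarith)]; linarith

lemma nm1_ge (n : ℕ) (hn : 2 ≤ n) : (1 : ℝ) ≤ ((n - 1 : ℕ) : ℝ) := by
  have h1 : 1 ≤ n - 1 := by omega
  exact_mod_cast h1

lemma clamp_low (n : ℕ) (h : ℝ) (hpos : 0 < h) (hn : 2 ≤ n) (t : ℝ) (ht : t ≤ h) :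
    clampI n h t = h := by
  unfold clampI
  rw [max_eq_right ht, min_eq_left]
  nlinarith [nm1_ge n hn]

lemma clamp_high (n : ℕ) (h : ℝ) (hpos : 0 < h) (hn : 2 ≤ n) (t : ℝ)
    (ht : ((n - 1 : ℕ) : ℝ) * h ≤ t) :
    clampI n h t = ((n - 1 : ℕ) : ℝ) * h := by
  unfold clampI
  rw [max_eq_left, min_eq_right ht]
  nlinarith [nm1_ge n hn]

lemma clamp_self (n : ℕ) (h t : ℝ) (h1 : h ≤ t) (h2 : t ≤ ((n - 1 : ℕ) : ℝ) * h) :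
    clampI n h t = t := by
  unfold clampI
  rw [max_eq_left h1, min_eq_left h2]

lemma interp_low (n : ℕ) (h : ℝ) (hpos : 0 < h) (hn : 2 ≤ n) (y : ℝ → ℝ)
    (t : ℝ) (ht : t ≤ h) : interp n h y t = y h := by
  unfold interp
  rw [clamp_low n h hpos hn t ht]
  have := node_eval n h hpos y 1 le_rfl (by omega)
  simpa using this

lemma interp_high (n : ℕ) (h : ℝ) (hpos : 0 < h) (hn : 2 ≤ n) (y : ℝ → ℝ)
    (t : ℝ) (ht : ((n - 1 : ℕ) : ℝ) * h ≤ t) :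
    interp n h y t = y (((n - 1 : ℕ) : ℝ) * h) := by
  unfold interp
  rw [clamp_high n h hpos hn t ht]
  exact node_eval n h hpos y (n - 1) (by omega) le_rfl

lemma interp_mid (n : ℕ) (h : ℝ) (hpos : 0 < h) (hn : 2 ≤ n) (y : ℝ → ℝ)
    (i : ℕ) (hi1 : 1 ≤ i) (hi2 : i + 1 ≤ n - 1) (t : ℝ)
    (ht : t ∈ Set.Icc ((i : ℝ) * h) (((i : ℝ) + 1) * h)) :
    interp n h y t = y ((i : ℝ) * h) +
      ((y (((i : ℝ) + 1) * h) - y ((i : ℝ) * h)) / h) * (t - (i : ℝ) * h) := by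
  unfold interp
  have hi1' : (1 : ℝ) ≤ (i : ℝ) := by exact_mod_cast hi1
  have hc : clampI n h t = t := by
    apply clamp_self
    · nlinarith [ht.1]
    · have h2 : ((i : ℝ) + 1) ≤ ((n - 1 : ℕ) : ℝ) := by exact_mod_cast hi2
      nlinarith [ht.2]
  rw [hc, cell_eval n h hpos y i hi1 hi2 t ht]
  have hne : h ≠ 0 := hpos.ne'
  field_simp
  ring

lemma interp_modpw (n : ℕ) (h : ℝ) (hpos : 0 < h) (hn : 2 ≤ n) (y : ℝ → ℝ) :
    ModPW n (fun i : ℕ => (i : ℝ) * h) (interp n h y) := by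
  refine ⟨(interp_cont n h y).continuousOn, ?_, ?_, ?_⟩
  · intro t ht
    simp only at ht ⊢
    rw [interp_low n h hpos hn y t (by simpa using ht.2),
      interp_low n h hpos hn y _ (by simp)]
  · intro t ht
    simp only at ht ⊢
    rw [interp_high n h hpos hn y t ht.1, interp_high n h hpos hn y _ le_rfl]
  · intro i hi1 hi2
    refine ⟨y ((i : ℝ) * h) - ((y (((i : ℝ) + 1) * h) - y ((i : ℝ) * h)) / h) * ((i : ℝ) * h),
      (y (((i : ℝ) + 1) * h) - y ((i : ℝ) * h)) / h, ?_⟩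
    intro t ht
    simp only at ht ⊢
    have ht' : t ∈ Set.Icc ((i : ℝ) * h) (((i : ℝ) + 1) * h) := by
      push_cast at ht
      exact ht
    rw [interp_mid n h hpos hn y i hi1 hi2 t ht']
    ring

lemma modpw_sub (n : ℕ) (x : ℕ → ℝ) (f g : ℝ → ℝ)
    (hf : ModPW n x f) (hg : ModPW n x g) :
    ModPW n x (fun t => f t - g t) := by
  obtain ⟨hfc, hf0, hfn, hfm⟩ := hf
  obtain ⟨hgc, hg0, hgn, hgm⟩ := hg
  refine ⟨hfc.sub hgc, ?_, ?_, ?_⟩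
  · intro t ht; simp only; rw [hf0 t ht, hg0 t ht]
  · intro t ht; simp only; rw [hfn t ht, hgn t ht]
  · intro i hi1 hi2
    obtain ⟨α1, β1, h1⟩ := hfm i hi1 hi2
    obtain ⟨α2, β2, h2⟩ := hgm i hi1 hi2
    exact ⟨α1 - α2, β1 - β2, fun t ht => by simp only; rw [h1 t ht, h2 t ht]; ring⟩

/-- H¹ error estimate for the L² projection Q_h onto S̃_h¹(0,1)
on the uniform mesh with size h, for y ∈ H²(0,1) with y'(0) = y'(1) = 0:
‖y' − (Q_h y)'‖_{L²(0,1)} ≤ (1/2)(√2 + 4√3) h ‖y''‖_{L²(0,1)}. -/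
theorem stmt_11
    (n : ℕ) (hn : 2 ≤ n) (h : ℝ) (hh : h = 1 / (n : ℝ))
    (y y' y'' Qy : ℝ → ℝ)
    (hy : ∀ t, HasDerivAt y (y' t) t)
    (hy' : ∀ t, HasDerivAt y' (y'' t) t)
    (hy''L2 : IntervalIntegrable (fun t => (y'' t) ^ 2) volume 0 1)
    (hb0 : y' 0 = 0) (hb1 : y' 1 = 0)
    (hQmem : ModPW n (fun i => (i : ℝ) * h) Qy)
    (hproj : ∀ yh : ℝ → ℝ, ModPW n (fun i => (i : ℝ) * h) yh →
      ∫ t in (0:ℝ)..1, Qy t * yh t = ∫ t in (0:ℝ)..1, y t * yh t) :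
    Real.sqrt (∫ t in (0:ℝ)..1, (y' t - deriv Qy t) ^ 2) ≤
      (1 / 2) * (Real.sqrt 2 + 4 * Real.sqrt 3) * h *
        Real.sqrt (∫ t in (0:ℝ)..1, (y'' t) ^ 2) := by
  have hnR : (2 : ℝ) ≤ (n : ℝ) := by exact_mod_cast hn
  have hpos : 0 < h := by rw [hh]; positivity
  have hne : h ≠ 0 := hpos.ne'
  set X : ℕ → ℝ := fun i => (i : ℝ) * h with hXdef
  have hX0 : X 0 = 0 := by simp [hXdef]
  have hXn : X n = 1 := by
    simp only [hXdef, hh]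
    field_simp
  have hXmono : ∀ i : ℕ, X i ≤ X (i + 1) := by
    intro i
    simp only [hXdef]
    push_cast
    nlinarith [hpos, (Nat.cast_nonneg i : (0:ℝ) ≤ i)]
  have hXstep : ∀ i : ℕ, X (i + 1) - X i = h := by
    intro i; simp only [hXdef]; push_cast; ring
  have hXnonneg : ∀ i : ℕ, 0 ≤ X i := by
    intro i; simp only [hXdef]; positivity
  have hXle1 : ∀ i : ℕ, i ≤ n → X i ≤ 1 := by
    intro i hi
    rw [← hXn]
    simp only [hXdef]
    have : (i : ℝ) ≤ n := by exact_mod_cast hi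
    nlinarith
  have hcellsub : ∀ i : ℕ, i < n →
      Set.uIcc (X i) (X (i + 1)) ⊆ Set.uIcc (0 : ℝ) 1 := by
    intro i hi
    rw [Set.uIcc_of_le (hXmono i), Set.uIcc_of_le (by norm_num : (0:ℝ) ≤ 1)]
    exact Set.Icc_subset_Icc (hXnonneg i) (hXle1 (i + 1) hi)
  -- continuity and integrability basics
  have hycont : Continuous y := continuous_iff_continuousAt.2 fun t => (hy t).continuousAt
  have hy'cont : Continuous y' := continuous_iff_continuousAt.2 fun t => (hy' t).continuousAt
  have hy''meas : Measurable y'' := by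
    have : y'' = deriv y' := funext fun t => ((hy' t).deriv).symm
    rw [this]; exact measurable_deriv _
  have hy''int01 : IntervalIntegrable y'' volume 0 1 := by
    apply IntervalIntegrable.mono_fun'
      (g := fun t => 1 + (y'' t) ^ 2)
      (intervalIntegrable_const.add hy''L2)
      hy''meas.aestronglyMeasurable.restrict
    filter_upwards with t
    have := sq_nonneg (|y'' t| - 1)
    simp only [Real.norm_eq_abs]
    nlinarith [sq_abs (y'' t)]
  have hy''intc : ∀ i : ℕ, i < n → IntervalIntegrable y'' volume (X i) (X (i + 1)) :=
    fun i hi => hy''int01.mono_set (hcellsub i hi)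
  have hy''sqc : ∀ i : ℕ, i < n →
      IntervalIntegrable (fun t => (y'' t) ^ 2) volume (X i) (X (i + 1)) :=
    fun i hi => hy''L2.mono_set (hcellsub i hi)
  -- the interpolant
  set Iy : ℝ → ℝ := interp n h y with hIydef
  -- coefficients of Qy on each cell
  have hQcell : ∀ i : ℕ, ∃ P Q : ℝ, i < n →
      ∀ t ∈ Set.Icc (X i) (X (i + 1)), Qy t = P + Q * t := by
    intro i
    by_cases h0 : i = 0
    · refine ⟨Qy (X 1), 0, fun _ t ht => ?_⟩
      subst h0
      rw [hQmem.2.1 t ht]; ring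
    · by_cases hlast : i = n - 1
      · refine ⟨Qy (X (n - 1)), 0, fun _ t ht => ?_⟩
        subst hlast
        have hkey : n - 1 + 1 = n := by omega
        rw [hkey] at ht
        rw [hQmem.2.2.1 t ht]; ring
      · by_cases hi : i < n
        · obtain ⟨α, β, hab⟩ := hQmem.2.2.2 i (by omega) (by omega)
          exact ⟨α, β, fun _ t ht => hab t ht⟩
        · exact ⟨0, 0, fun hc => absurd hc hi⟩
  choose Pc Qc hPQ using hQcell
  -- coefficients of Iy on each cell
  set ν : ℕ → ℝ := fun i => if i = 0 then y (X 1) else y (X i) with hνdef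
  set γ : ℕ → ℝ := fun i =>
    if i = 0 ∨ i = n - 1 then 0 else (y (X (i + 1)) - y (X i)) / h with hγdef
  have hX1 : X 1 = h := by simp [hXdef]
  have hIcell : ∀ i : ℕ, i < n → ∀ t ∈ Set.Icc (X i) (X (i + 1)),
      Iy t = ν i + γ i * (t - X i) := by
    intro i hi t ht
    by_cases h0 : i = 0
    · subst h0
      have h1 : Iy t = y h := interp_low n h hpos hn y t (by rw [← hX1]; exact ht.2)
      simp only [hνdef, hγdef, if_pos rfl, if_pos (Or.inl rfl)]
      rw [h1, hX1]; ring
    · by_cases hlast : i = n - 1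
      · subst hlast
        have h1 : Iy t = y (((n - 1 : ℕ) : ℝ) * h) :=
          interp_high n h hpos hn y t ht.1
        have h2 : (n:ℕ) - 1 ≠ 0 := by omega
        simp only [hνdef, hγdef, if_neg h2, if_pos (Or.inr rfl)]
        rw [h1]; simp only [hXdef]; ring
      · have hi1 : 1 ≤ i := by omega
        have hi2 : i + 1 ≤ n - 1 := by omega
        have ht' : t ∈ Set.Icc ((i : ℝ) * h) (((i : ℝ) + 1) * h) := by
          simp only [hXdef] at ht
          push_cast at ht
          exact ht
        have h1 : Iy t = y ((i : ℝ) * h) +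
          ((y (((i : ℝ) + 1) * h) - y ((i : ℝ) * h)) / h) * (t - (i : ℝ) * h) :=
          interp_mid n h hpos hn y i hi1 hi2 t ht'
        simp only [hνdef, hγdef, if_neg h0, if_neg (by tauto : ¬(i = 0 ∨ i = n - 1))]
        rw [h1]
        simp only [hXdef]
        push_cast
        ring
  have hslopept : ∀ i : ℕ, i < n → ∃ ξ, X i ≤ ξ ∧ ξ ≤ X (i + 1) ∧ y' ξ = γ i := by
    intro i hi
    by_cases h0 : i = 0
    · subst h0
      refine ⟨0, hX0.le, by linarith [hXmono 0, hX0.ge], ?_⟩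
      simp only [hγdef, if_pos (Or.inl rfl)]
      exact hb0
    · by_cases hlast : i = n - 1
      · subst hlast
        have hkey : n - 1 + 1 = n := by omega
        refine ⟨1, ?_, ?_, ?_⟩
        · rw [← hXn, ← hkey]; exact hXmono (n - 1)
        · rw [hkey, hXn]
        · simp only [hγdef, if_pos (Or.inr rfl)]
          exact hb1
      · have hlt : X i < X (i + 1) := by
          have := hXstep i; nlinarith [hXmono i]
        obtain ⟨ξ, hξmem, hξeq⟩ := exists_hasDerivAt_eq_slope y y' hlt
          (hycont.continuousOn) (fun x _ => hy x)
        refine ⟨ξ, le_of_lt hξmem.1, le_of_lt hξmem.2, ?_⟩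
        rw [hξeq, hXstep i]
        simp only [hγdef, if_neg (by tauto : ¬(i = 0 ∨ i = n - 1))]
  have hzeropt : ∀ i : ℕ, i < n → ∃ ζ, X i ≤ ζ ∧ ζ ≤ X (i + 1) ∧
      y ζ - (ν i + γ i * (ζ - X i)) = 0 := by
    intro i hi
    by_cases h0 : i = 0
    · subst h0
      refine ⟨X 1, hXmono 0, le_rfl, ?_⟩
      simp only [hνdef, hγdef, if_pos rfl, if_pos (Or.inl rfl)]
      ring
    · refine ⟨X i, le_rfl, hXmono i, ?_⟩
      simp only [hνdef, if_neg h0]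
      ring
  -- cell quantities
  set Bc : ℕ → ℝ := fun i => ∫ t in X i..X (i + 1), (y'' t) ^ 2 with hBcdef
  set v : ℕ → ℝ := fun i => ∫ t in X i..X (i + 1), (y' t - γ i) ^ 2 with hvdef
  set w : ℕ → ℝ := fun i => ∫ t in X i..X (i + 1), (γ i - Qc i) ^ 2 with hwdef
  have hBcnn : ∀ i : ℕ, 0 ≤ Bc i :=
    fun i => intervalIntegral.integral_nonneg (hXmono i) fun u _ => sq_nonneg _
  have hvnn : ∀ i : ℕ, 0 ≤ v i :=
    fun i => intervalIntegral.integral_nonneg (hXmono i) fun u _ => sq_nonneg _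
  have hwnn : ∀ i : ℕ, 0 ≤ w i :=
    fun i => intervalIntegral.integral_nonneg (hXmono i) fun u _ => sq_nonneg _
  -- interpolation estimates
  have h_v : ∀ i : ℕ, i < n → v i ≤ h ^ 2 / 2 * Bc i := by
    intro i hi
    obtain ⟨ξ, hξ1, hξ2, hξeq⟩ := hslopept i hi
    have key := W1 (X i) (X (i + 1)) ξ (hXmono i) hξ1 hξ2
      (fun t => y' t - γ i) y'' (fun t => (hy' t).sub_const _)
      (hy''intc i hi) (hy''sqc i hi) (by show y' ξ - γ i = 0; rw [hξeq]; ring)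
    rw [hXstep i] at key
    exact key
  have h_yI : ∀ i : ℕ, i < n →
      ∫ t in X i..X (i + 1), (y t - Iy t) ^ 2 ≤ h ^ 2 / 2 * v i := by
    intro i hi
    have hcong : ∫ t in X i..X (i + 1), (y t - Iy t) ^ 2 =
        ∫ t in X i..X (i + 1), (y t - (ν i + γ i * (t - X i))) ^ 2 := by
      apply intervalIntegral.integral_congr
      intro t ht
      rw [Set.uIcc_of_le (hXmono i)] at ht
      simp only
      rw [hIcell i hi t ht]
    obtain ⟨ζ, hζ1, hζ2, hζeq⟩ := hzeropt i hi
    have key := W1 (X i) (X (i + 1)) ζ (hXmono i) hζ1 hζ2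
      (fun t => y t - (ν i + γ i * (t - X i))) (fun t => y' t - γ i)
      (fun t => by
        have hlin : HasDerivAt (fun s => ν i + γ i * (s - X i)) (γ i) t := by
          simpa using (((hasDerivAt_id t).sub_const (X i)).const_mul (γ i)).const_add (ν i)
        exact (hy t).sub hlin)
      ((hy'cont.sub continuous_const).continuousOn.intervalIntegrable)
      (((hy'cont.sub continuous_const).pow 2).continuousOn.intervalIntegrable)
      hζeq
    rw [hXstep i] at key
    rw [hcong]
    exact key
  have h_w : ∀ i : ℕ, i < n →
      w i ≤ 12 / h ^ 2 * ∫ t in X i..X (i + 1), (Qy t - Iy t) ^ 2 := by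
    intro i hi
    have hconst : w i = (γ i - Qc i) ^ 2 * h := by
      simp only [hwdef]
      rw [intervalIntegral.integral_const, smul_eq_mul, hXstep i]
      ring
    have hcong : ∫ t in X i..X (i + 1), (Qy t - Iy t) ^ 2 =
        ∫ t in X i..X (i + 1),
          ((Pc i - ν i + γ i * X i) + (Qc i - γ i) * t) ^ 2 := by
      apply intervalIntegral.integral_congr
      intro t ht
      rw [Set.uIcc_of_le (hXmono i)] at ht
      simp only
      rw [hPQ i hi t ht, hIcell i hi t ht]
      ring
    have hW2 := W2 (X i) (X (i + 1)) (Pc i - ν i + γ i * X i) (Qc i - γ i) (hXmono i)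
    rw [hXstep i, ← hcong] at hW2
    have h2 : (0:ℝ) < h ^ 2 := by positivity
    rw [hconst, div_mul_eq_mul_div, le_div_iff₀ h2]
    nlinarith [hW2]
  -- derivative of Qy on open cells
  have hDQ : ∀ i : ℕ, i < n → ∀ t ∈ Set.Ioo (X i) (X (i + 1)), deriv Qy t = Qc i := by
    intro i hi t ht
    have hopen : Set.Ioo (X i) (X (i + 1)) ∈ nhds t := isOpen_Ioo.mem_nhds ht
    have heq : Qy =ᶠ[nhds t] fun s => Pc i + Qc i * s :=
      Filter.eventuallyEq_of_mem hopen fun s hs => hPQ i hi s (Set.Ioo_subset_Icc_self hs)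
    rw [heq.deriv_eq]
    have hder : HasDerivAt (fun s => Pc i + Qc i * s) (Qc i) t := by
      simpa using ((hasDerivAt_id t).const_mul (Qc i)).const_add (Pc i)
    exact hder.deriv
  -- the LHS integrand on each cell
  have hfae : ∀ i : ℕ, ∀ᵐ x : ℝ ∂volume, x ≠ X (i + 1) := by
    intro i
    have hset : {x : ℝ | ¬ x ≠ X (i + 1)} = {X (i + 1)} := by ext z; simp
    rw [ae_iff, hset]
    exact measure_singleton _
  have h_u : ∀ i : ℕ, i < n →
      ∫ t in X i..X (i + 1), (y' t - deriv Qy t) ^ 2 =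
        ∫ t in X i..X (i + 1), (y' t - Qc i) ^ 2 := by
    intro i hi
    apply intervalIntegral.integral_congr_ae
    filter_upwards [hfae i] with t htne htmem
    rw [Set.uIoc_of_le (hXmono i)] at htmem
    rw [hDQ i hi t ⟨htmem.1, lt_of_le_of_ne htmem.2 htne⟩]
  have h_uint : ∀ i : ℕ, i < n →
      IntervalIntegrable (fun t => (y' t - deriv Qy t) ^ 2) volume (X i) (X (i + 1)) := by
    intro i hi
    have h1 : IntervalIntegrable (fun t => (y' t - Qc i) ^ 2) volume (X i) (X (i + 1)) :=
      ((hy'cont.sub continuous_const).pow 2).continuousOn.intervalIntegrable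
    rw [intervalIntegrable_iff] at h1 ⊢
    apply h1.congr
    rw [Filter.EventuallyEq, ae_restrict_iff' measurableSet_uIoc]
    filter_upwards [hfae i] with t htne htmem
    rw [Set.uIoc_of_le (hXmono i)] at htmem
    rw [hDQ i hi t ⟨htmem.1, lt_of_le_of_ne htmem.2 htne⟩]
  -- cellwise Minkowski
  have h_cs : ∀ i : ℕ, i < n →
      (∫ t in X i..X (i + 1), (y' t - Qc i) ^ 2) ≤
        v i + 2 * Real.sqrt (v i) * Real.sqrt (w i) + w i := by
    intro i hi
    have i1 : IntervalIntegrable (fun t => (y' t - γ i) ^ 2) volume (X i) (X (i + 1)) :=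
      ((hy'cont.sub continuous_const).pow 2).continuousOn.intervalIntegrable
    have i2 : IntervalIntegrable (fun t => (y' t - γ i) * (γ i - Qc i)) volume
        (X i) (X (i + 1)) :=
      ((hy'cont.sub continuous_const).mul continuous_const).continuousOn.intervalIntegrable
    have i3 : IntervalIntegrable (fun t : ℝ => (γ i - Qc i) ^ 2) volume (X i) (X (i + 1)) :=
      intervalIntegrable_const
    have hexp : ∫ t in X i..X (i + 1), (y' t - Qc i) ^ 2 =
        (∫ t in X i..X (i + 1), (y' t - γ i) ^ 2) +
          2 * (∫ t in X i..X (i + 1), (y' t - γ i) * (γ i - Qc i)) +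
          ∫ t in X i..X (i + 1), (γ i - Qc i) ^ 2 := by
      rw [← intervalIntegral.integral_const_mul,
        ← intervalIntegral.integral_add i1 (i2.const_mul 2),
        ← intervalIntegral.integral_add (i1.add (i2.const_mul 2)) i3]
      apply intervalIntegral.integral_congr
      intro t _
      simp only
      ring
    have hcs := cs_int (X i) (X (i + 1)) (hXmono i) (fun t => y' t - γ i)
      (fun _ => γ i - Qc i) i2 i1 i3
    have hcross : (∫ t in X i..X (i + 1), (y' t - γ i) * (γ i - Qc i)) ≤
        Real.sqrt (v i) * Real.sqrt (w i) := by
      rw [← Real.sqrt_mul (hvnn i)]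
      rcases le_or_gt (∫ t in X i..X (i + 1), (y' t - γ i) * (γ i - Qc i)) 0 with hC | hC
      · exact hC.trans (Real.sqrt_nonneg _)
      · rw [Real.le_sqrt hC.le (mul_nonneg (hvnn i) (hwnn i))]
        exact hcs
    rw [hexp]
    have hw' : (∫ t in X i..X (i + 1), (γ i - Qc i) ^ 2) = w i := rfl
    rw [hw']
    linarith
  -- globalization
  set A := ∫ t in (0:ℝ)..1, (y' t - deriv Qy t) ^ 2 with hAdef
  set B := ∫ t in (0:ℝ)..1, (y'' t) ^ 2 with hBdef
  have hsumA : A = ∑ i ∈ Finset.range n,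
      ∫ t in X i..X (i + 1), (y' t - deriv Qy t) ^ 2 := by
    rw [hAdef, ← hX0, ← hXn]
    exact (intervalIntegral.sum_integral_adjacent_intervals
      (fun k hk => h_uint k hk)).symm
  have hsumB : B = ∑ i ∈ Finset.range n, Bc i := by
    rw [hBdef, ← hX0, ← hXn]
    exact (intervalIntegral.sum_integral_adjacent_intervals
      (fun k hk => hy''sqc k hk)).symm
  have hBnn : 0 ≤ B := by
    rw [hsumB]; exact Finset.sum_nonneg fun i _ => hBcnn i
  set Sv := ∑ i ∈ Finset.range n, v i with hSvdef
  set Sw := ∑ i ∈ Finset.range n, w i with hSwdef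
  have hSvnn : 0 ≤ Sv := Finset.sum_nonneg fun i _ => hvnn i
  have hSwnn : 0 ≤ Sw := Finset.sum_nonneg fun i _ => hwnn i
  have hA_le : A ≤ Sv + 2 * Real.sqrt Sv * Real.sqrt Sw + Sw := by
    rw [hsumA]
    have step1 : ∑ i ∈ Finset.range n, ∫ t in X i..X (i + 1), (y' t - deriv Qy t) ^ 2 ≤
        ∑ i ∈ Finset.range n,
          (v i + 2 * Real.sqrt (v i) * Real.sqrt (w i) + w i) := by
      apply Finset.sum_le_sum
      intro i hi
      rw [h_u i (Finset.mem_range.1 hi)]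
      exact h_cs i (Finset.mem_range.1 hi)
    have step2 : ∑ i ∈ Finset.range n,
        (v i + 2 * Real.sqrt (v i) * Real.sqrt (w i) + w i) =
        Sv + 2 * (∑ i ∈ Finset.range n, Real.sqrt (v i) * Real.sqrt (w i)) + Sw := by
      rw [Finset.sum_add_distrib, Finset.sum_add_distrib, Finset.mul_sum]
      simp only [mul_assoc]
      rfl
    have step3 : (∑ i ∈ Finset.range n, Real.sqrt (v i) * Real.sqrt (w i)) ≤
        Real.sqrt Sv * Real.sqrt Sw :=
      Real.sum_sqrt_mul_sqrt_le (Finset.range n) hvnn hwnn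
    calc _ ≤ _ := step1
    _ = _ := step2
    _ ≤ Sv + 2 * (Real.sqrt Sv * Real.sqrt Sw) + Sw := by linarith
    _ = Sv + 2 * Real.sqrt Sv * Real.sqrt Sw + Sw := by ring
  have hSv_le : Sv ≤ h ^ 2 / 2 * B := by
    rw [hsumB, Finset.mul_sum]
    exact Finset.sum_le_sum fun i hi => h_v i (Finset.mem_range.1 hi)
  -- the function E = Qy - Iy and Pythagoras
  have hIycont : Continuous Iy := by rw [hIydef]; exact interp_cont n h y
  have hQcont : ContinuousOn Qy (Set.Icc 0 1) := hQmem.1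
  have hEcont : ContinuousOn (fun t => Qy t - Iy t) (Set.Icc 0 1) :=
    hQcont.sub hIycont.continuousOn
  have hu01 : Set.uIcc (0 : ℝ) 1 = Set.Icc 0 1 := Set.uIcc_of_le (by norm_num)
  have hII : ∀ f : ℝ → ℝ, ContinuousOn f (Set.Icc 0 1) →
      IntervalIntegrable f volume 0 1 := by
    intro f hc
    apply ContinuousOn.intervalIntegrable
    rwa [hu01]
  have hEmod : ModPW n X (fun t => Qy t - Iy t) := by
    apply modpw_sub n X Qy Iy hQmem
    rw [hXdef, hIydef]
    exact interp_modpw n h hpos hn y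
  have horth : ∫ t in (0:ℝ)..1, (y t - Qy t) * (Qy t - Iy t) = 0 := by
    have hp := hproj (fun t => Qy t - Iy t) hEmod
    have i1 : IntervalIntegrable (fun t => y t * (Qy t - Iy t)) volume 0 1 :=
      hII _ (hycont.continuousOn.mul hEcont)
    have i2 : IntervalIntegrable (fun t => Qy t * (Qy t - Iy t)) volume 0 1 :=
      hII _ (hQcont.mul hEcont)
    have hs : ∫ t in (0:ℝ)..1, (y t - Qy t) * (Qy t - Iy t) =
        (∫ t in (0:ℝ)..1, y t * (Qy t - Iy t)) -
          ∫ t in (0:ℝ)..1, Qy t * (Qy t - Iy t) := by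
      rw [← intervalIntegral.integral_sub i1 i2]
      apply intervalIntegral.integral_congr
      intro t _
      simp only
      ring
    rw [hs, hp]
    ring
  have hPyth : (∫ t in (0:ℝ)..1, (Qy t - Iy t) ^ 2) ≤
      ∫ t in (0:ℝ)..1, (y t - Iy t) ^ 2 := by
    have i1 : IntervalIntegrable (fun t => (y t - Qy t) ^ 2) volume 0 1 :=
      hII _ ((hycont.continuousOn.sub hQcont).pow 2)
    have i2 : IntervalIntegrable (fun t => (y t - Qy t) * (Qy t - Iy t)) volume 0 1 :=
      hII _ ((hycont.continuousOn.sub hQcont).mul hEcont)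
    have i3 : IntervalIntegrable (fun t => (Qy t - Iy t) ^ 2) volume 0 1 :=
      hII _ (hEcont.pow 2)
    have hexp : ∫ t in (0:ℝ)..1, (y t - Iy t) ^ 2 =
        (∫ t in (0:ℝ)..1, (y t - Qy t) ^ 2) +
          2 * (∫ t in (0:ℝ)..1, (y t - Qy t) * (Qy t - Iy t)) +
          ∫ t in (0:ℝ)..1, (Qy t - Iy t) ^ 2 := by
      rw [← intervalIntegral.integral_const_mul,
        ← intervalIntegral.integral_add i1 (i2.const_mul 2),
        ← intervalIntegral.integral_add (i1.add (i2.const_mul 2)) i3]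
      apply intervalIntegral.integral_congr
      intro t _
      simp only
      ring
    have hnn : 0 ≤ ∫ t in (0:ℝ)..1, (y t - Qy t) ^ 2 :=
      intervalIntegral.integral_nonneg (by norm_num) fun u _ => sq_nonneg _
    rw [hexp, horth]
    linarith
  have hyIsum : (∫ t in (0:ℝ)..1, (y t - Iy t) ^ 2) =
      ∑ i ∈ Finset.range n, ∫ t in X i..X (i + 1), (y t - Iy t) ^ 2 := by
    rw [← hX0, ← hXn]
    exact (intervalIntegral.sum_integral_adjacent_intervals fun k hk =>
      (((hycont.sub hIycont).pow 2).continuousOn.intervalIntegrable)).symm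
  have hyI_le : (∫ t in (0:ℝ)..1, (y t - Iy t) ^ 2) ≤ h ^ 2 / 2 * Sv := by
    rw [hyIsum, hSvdef, Finset.mul_sum]
    exact Finset.sum_le_sum fun i hi => h_yI i (Finset.mem_range.1 hi)
  have hEsum : (∫ t in (0:ℝ)..1, (Qy t - Iy t) ^ 2) =
      ∑ i ∈ Finset.range n, ∫ t in X i..X (i + 1), (Qy t - Iy t) ^ 2 := by
    rw [← hX0, ← hXn]
    refine (intervalIntegral.sum_integral_adjacent_intervals fun k hk => ?_).symm
    exact ((hEcont.pow 2).mono (hu01 ▸ hcellsub k hk)).intervalIntegrable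
  have hSw_le : Sw ≤ 3 * h ^ 2 * B := by
    have c1 : Sw ≤ ∑ i ∈ Finset.range n,
        12 / h ^ 2 * ∫ t in X i..X (i + 1), (Qy t - Iy t) ^ 2 :=
      Finset.sum_le_sum fun i hi => h_w i (Finset.mem_range.1 hi)
    have c2 : (∑ i ∈ Finset.range n,
        12 / h ^ 2 * ∫ t in X i..X (i + 1), (Qy t - Iy t) ^ 2) =
        12 / h ^ 2 * ∫ t in (0:ℝ)..1, (Qy t - Iy t) ^ 2 := by
      rw [← Finset.mul_sum, hEsum]
    have hpos2 : (0:ℝ) ≤ 12 / h ^ 2 := by positivity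
    have c3 : 12 / h ^ 2 * (∫ t in (0:ℝ)..1, (Qy t - Iy t) ^ 2) ≤
        12 / h ^ 2 * (h ^ 2 / 2 * Sv) :=
      mul_le_mul_of_nonneg_left (hPyth.trans hyI_le) hpos2
    have c4 : 12 / h ^ 2 * (h ^ 2 / 2 * Sv) ≤ 12 / h ^ 2 * (h ^ 2 / 2 * (h ^ 2 / 2 * B)) := by
      apply mul_le_mul_of_nonneg_left _ hpos2
      apply mul_le_mul_of_nonneg_left hSv_le (by positivity)
    have c5 : 12 / h ^ 2 * (h ^ 2 / 2 * (h ^ 2 / 2 * B)) = 3 * h ^ 2 * B := by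
      field_simp
      ring
    linarith
  -- final numeric assembly
  set SB := Real.sqrt B with hSBdef
  have hSBnn : 0 ≤ SB := Real.sqrt_nonneg _
  have hB_SB : B = SB ^ 2 := (Real.sq_sqrt hBnn).symm
  have e1 : Real.sqrt Sv ≤ Real.sqrt (1 / 2) * (h * SB) := by
    have h1 : Sv ≤ 1 / 2 * (h * SB) ^ 2 := by
      rw [hB_SB] at hSv_le
      calc Sv ≤ h ^ 2 / 2 * SB ^ 2 := hSv_le
      _ = 1 / 2 * (h * SB) ^ 2 := by ring
    calc Real.sqrt Sv ≤ Real.sqrt (1 / 2 * (h * SB) ^ 2) := Real.sqrt_le_sqrt h1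
    _ = Real.sqrt (1 / 2) * (h * SB) := by
      rw [Real.sqrt_mul (by norm_num), Real.sqrt_sq (by positivity)]
  have e2 : Real.sqrt Sw ≤ Real.sqrt 3 * (h * SB) := by
    have h1 : Sw ≤ 3 * (h * SB) ^ 2 := by
      rw [hB_SB] at hSw_le
      calc Sw ≤ 3 * h ^ 2 * SB ^ 2 := hSw_le
      _ = 3 * (h * SB) ^ 2 := by ring
    calc Real.sqrt Sw ≤ Real.sqrt (3 * (h * SB) ^ 2) := Real.sqrt_le_sqrt h1
    _ = Real.sqrt 3 * (h * SB) := by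
      rw [Real.sqrt_mul (by norm_num), Real.sqrt_sq (by positivity)]
  have hAfin : Real.sqrt A ≤ Real.sqrt Sv + Real.sqrt Sw := by
    have hnn2 : 0 ≤ Real.sqrt Sv + Real.sqrt Sw :=
      add_nonneg (Real.sqrt_nonneg _) (Real.sqrt_nonneg _)
    have h1 : A ≤ (Real.sqrt Sv + Real.sqrt Sw) ^ 2 := by
      have hvv : Real.sqrt Sv ^ 2 = Sv := Real.sq_sqrt hSvnn
      have hww : Real.sqrt Sw ^ 2 = Sw := Real.sq_sqrt hSwnn
      have hsq : (Real.sqrt Sv + Real.sqrt Sw) ^ 2 =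
          Sv + 2 * Real.sqrt Sv * Real.sqrt Sw + Sw := by
        rw [add_sq, hvv, hww]
      rw [hsq]
      exact hA_le
    calc Real.sqrt A ≤ Real.sqrt ((Real.sqrt Sv + Real.sqrt Sw) ^ 2) := Real.sqrt_le_sqrt h1
    _ = Real.sqrt Sv + Real.sqrt Sw := Real.sqrt_sq hnn2
  have hhalf : Real.sqrt (1 / 2) ≤ Real.sqrt 2 / 2 := by
    have : (1:ℝ) / 2 = (Real.sqrt 2 / 2) ^ 2 := by
      rw [div_pow, Real.sq_sqrt (by norm_num : (0:ℝ) ≤ 2)]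
      norm_num
    rw [this, Real.sqrt_sq (by positivity)]
  have hfinal : Real.sqrt Sv + Real.sqrt Sw ≤
      1 / 2 * (Real.sqrt 2 + 4 * Real.sqrt 3) * h * SB := by
    have hhSB : 0 ≤ h * SB := by positivity
    have hstep := mul_le_mul_of_nonneg_right hhalf hhSB
    have h3nn : 0 ≤ Real.sqrt 3 * (h * SB) := by positivity
    have hrw : 1 / 2 * (Real.sqrt 2 + 4 * Real.sqrt 3) * h * SB =
        Real.sqrt 2 / 2 * (h * SB) + 2 * (Real.sqrt 3 * (h * SB)) := by ring
    rw [hrw]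
    linarith [e1, e2, hstep, h3nn]
  calc Real.sqrt A ≤ Real.sqrt Sv + Real.sqrt Sw := hAfin
  _ ≤ 1 / 2 * (Real.sqrt 2 + 4 * Real.sqrt 3) * h * SB := hfinal
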